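/- arXiv:2208.14120 — 2 statements merged into one kernel-verified Lean document; each statement's English description precedes it below -/
import Mathlib

section
/- Let d, m ≥ 1, l > 0, β > 0, B ∈ ℝ^{d×m}, ε > 0, and Ω̄ = [−l,l]^d. Let f : ℝ^d → ℝ^d and let v, v_ε : ℝ^d → ℝ be differentiable. Define F(y) = f(y) − (1/β) B Bᵀ ∇v(y) and F_ε(y) = f(y) − (1/β) B Bᵀ ∇v_ε(y). Assume F is Lipschitz on Ω̄ with constant L, assume |Bᵀ(∇v(y) − ∇v_ε(y))| ≤ ε for all y ∈ Ω̄, and set C = 2L + ‖B‖²/β², where ‖B‖ is the operator norm. Let T > 0 and let y, y_ε : [0,T] → Ω̄ be differentiable with y(0) = y_ε(0), y'(t) = F(y(t)) and y_ε'(t) = F_ε(y_ε(t)) for all t ∈ [0,T]. Then |y_ε(t) − y(t)|² ≤ (ε²/C)(e^{Ct} − 1) for all t ∈ [0,T]. -/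
open Matrix Set

open scoped RealInnerProductSpace

/-- The map `x ↦ Aᵀ x` from `ℝ^d` to `ℝ^m` induced by a matrix `A ∈ ℝ^{d×m}`,
as a map of Euclidean spaces. -/
noncomputable def matVec {d m : ℕ} (A : Matrix (Fin d) (Fin m) ℝ) :
    EuclideanSpace ℝ (Fin m) → EuclideanSpace ℝ (Fin d) :=
  fun x => Matrix.toEuclideanLin A x

/-- The `ℓ²` operator norm of a matrix `A ∈ ℝ^{d×m}`. -/
noncomputable def matOpNorm {d m : ℕ} (A : Matrix (Fin d) (Fin m) ℝ) : ℝ :=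
  ‖LinearMap.toContinuousLinearMap (Matrix.toEuclideanLin A)‖

lemma matVec_norm_le {d m : ℕ} (A : Matrix (Fin d) (Fin m) ℝ)
    (x : EuclideanSpace ℝ (Fin m)) : ‖matVec A x‖ ≤ matOpNorm A * ‖x‖ :=
  (LinearMap.toContinuousLinearMap (Matrix.toEuclideanLin A)).le_opNorm x

set_option maxHeartbeats 2000000 in
/-- Gronwall-type estimate for the difference of two closed-loop
trajectories driven by nearby feedback gradients. -/
theorem stmt_3 (d m : ℕ) (hd : 1 ≤ d) (hm : 1 ≤ m)
    (l β ε L C T : ℝ) (hl : 0 < l) (hβ : 0 < β) (hε : 0 < ε) (hL : 0 ≤ L) (hT : 0 < T)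
    (B : Matrix (Fin d) (Fin m) ℝ)
    (f : EuclideanSpace ℝ (Fin d) → EuclideanSpace ℝ (Fin d))
    (v vε : EuclideanSpace ℝ (Fin d) → ℝ)
    (hv : Differentiable ℝ v) (hvε : Differentiable ℝ vε)
    (Ω : Set (EuclideanSpace ℝ (Fin d)))
    (hΩ : Ω = {y | ∀ i, |y i| ≤ l})
    (F Fε : EuclideanSpace ℝ (Fin d) → EuclideanSpace ℝ (Fin d))
    (hF : F = fun y => f y - β⁻¹ • matVec B (matVec Bᵀ (gradient v y)))
    (hFε : Fε = fun y => f y - β⁻¹ • matVec B (matVec Bᵀ (gradient vε y)))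
    (hFLip : ∀ x ∈ Ω, ∀ y ∈ Ω, ‖F x - F y‖ ≤ L * ‖x - y‖)
    (hclose : ∀ y ∈ Ω, ‖matVec Bᵀ (gradient v y) - matVec Bᵀ (gradient vε y)‖ ≤ ε)
    (hC : C = 2 * L + (matOpNorm B) ^ 2 / β ^ 2)
    (y yε : ℝ → EuclideanSpace ℝ (Fin d))
    (hy0 : y 0 = yε 0)
    (hyΩ : ∀ t ∈ Icc (0:ℝ) T, y t ∈ Ω) (hyεΩ : ∀ t ∈ Icc (0:ℝ) T, yε t ∈ Ω)
    (hy : ∀ t ∈ Icc (0:ℝ) T, HasDerivAt y (F (y t)) t)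
    (hyε : ∀ t ∈ Icc (0:ℝ) T, HasDerivAt yε (Fε (yε t)) t) :
    ∀ t ∈ Icc (0:ℝ) T, ‖yε t - y t‖ ^ 2 ≤ ε ^ 2 / C * (Real.exp (C * t) - 1) := by
  obtain ⟨M, hM⟩ : ∃ M, matOpNorm B = M := ⟨_, rfl⟩
  rw [hM] at hC
  have hM0 : 0 ≤ M := hM ▸ norm_nonneg _
  -- the two vector fields differ by a controlled term
  have heqd : ∀ x, Fε x - F x
      = β⁻¹ • matVec B (matVec Bᵀ (gradient v x) - matVec Bᵀ (gradient vε x)) := by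
    intro x
    rw [hF, hFε]
    simp only [matVec, map_sub, smul_sub]
    abel
  have hdiff : ∀ x ∈ Ω, ‖Fε x - F x‖ ≤ β⁻¹ * M * ε := by
    intro x hx
    rw [heqd x, norm_smul]
    have h1 : ‖matVec B (matVec Bᵀ (gradient v x) - matVec Bᵀ (gradient vε x))‖
        ≤ M * ε := by
      refine ((matVec_norm_le B _).trans_eq (by rw [hM])).trans ?_
      exact mul_le_mul_of_nonneg_left (hclose x hx) hM0
    have h2 : ‖β⁻¹‖ = β⁻¹ := by
      rw [Real.norm_eq_abs, abs_of_pos (by positivity)]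
    rw [h2, mul_assoc]
    exact mul_le_mul_of_nonneg_left h1 (by positivity)
  -- the difference trajectory
  have hz : ∀ t ∈ Icc (0:ℝ) T,
      HasDerivAt (fun s => yε s - y s) (Fε (yε t) - F (y t)) t :=
    fun t ht => (hyε t ht).sub (hy t ht)
  have hg' : ∀ t ∈ Icc (0:ℝ) T,
      HasDerivAt (fun s => ‖yε s - y s‖ ^ 2)
        (2 * ⟪yε t - y t, Fε (yε t) - F (y t)⟫) t := by
    intro t ht
    have h1 := HasDerivAt.inner ℝ (hz t ht) (hz t ht)
    have h2 : (fun s => ⟪yε s - y s, yε s - y s⟫) = fun s => ‖yε s - y s‖ ^ 2 := by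
      funext s; exact real_inner_self_eq_norm_sq _
    rw [h2] at h1
    convert h1 using 1
    · rfl
    · rfl
    rw [real_inner_comm]; ring
  intro t ht
  by_cases hC0 : C = 0
  · -- degenerate case: L = 0 and B = 0, the trajectories coincide
    have hd2 : (0:ℝ) ≤ M ^ 2 / β ^ 2 := by positivity
    have hL0 : L = 0 := by nlinarith
    have hFeq : ∀ x, ‖Fε x - F x‖ = 0 := by
      intro x
      have hM20 : M ^ 2 / β ^ 2 = 0 := by nlinarith
      have : M = 0 := by
        have hb : β ^ 2 ≠ 0 := by positivity
        have := (div_eq_zero_iff.mp hM20).resolve_right hb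
        nlinarith
      rw [heqd x, norm_smul]
      have h1 : ‖matVec B (matVec Bᵀ (gradient v x) - matVec Bᵀ (gradient vε x))‖ = 0 := by
        have hle := (matVec_norm_le B
          (matVec Bᵀ (gradient v x) - matVec Bᵀ (gradient vε x))).trans_eq (by rw [hM, this])
        rw [zero_mul] at hle
        exact le_antisymm hle (norm_nonneg _)
      rw [h1, mul_zero]
    have hzz : ∀ s ∈ Icc (0:ℝ) T, ‖yε s - y s‖ ≤ gronwallBound 0 0 0 (s - 0) := by
      apply norm_le_gronwallBound_of_norm_deriv_right_le
        (f' := fun s => Fε (yε s) - F (y s))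
      · exact fun s hs => ((hz s hs).continuousAt).continuousWithinAt
      · exact fun s hs => (hz s (Ico_subset_Icc_self hs)).hasDerivWithinAt
      · simp [hy0]
      · intro s hs
        have hsI : s ∈ Icc (0:ℝ) T := Ico_subset_Icc_self hs
        have key : Fε (yε s) - F (y s) = (Fε (yε s) - F (yε s)) + (F (yε s) - F (y s)) := by
          abel
        rw [key]
        calc ‖(Fε (yε s) - F (yε s)) + (F (yε s) - F (y s))‖
            ≤ ‖Fε (yε s) - F (yε s)‖ + ‖F (yε s) - F (y s)‖ := norm_add_le _ _
          _ ≤ 0 + L * ‖yε s - y s‖ := by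
              gcongr ?_ + ?_
              · exact le_of_eq (hFeq _)
              · exact hFLip _ (hyεΩ s hsI) _ (hyΩ s hsI)
          _ ≤ 0 * ‖yε s - y s‖ + 0 := by rw [hL0]; simp
    have h0 : ‖yε t - y t‖ = 0 := by
      have := hzz t ht
      rw [gronwallBound_ε0_δ0] at this
      exact le_antisymm this (norm_nonneg _)
    rw [hC0]
    simp [h0]
  · -- main case: Grönwall on the squared norm
    have key : ∀ s ∈ Icc (0:ℝ) T,
        ‖yε s - y s‖ ^ 2 ≤ gronwallBound 0 C (ε ^ 2) (s - 0) := by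
      apply le_gronwallBound_of_liminf_deriv_right_le
        (f' := fun s => 2 * ⟪yε s - y s, Fε (yε s) - F (y s)⟫)
      · exact fun s hs => ((hg' s hs).continuousAt).continuousWithinAt
      · intro x hx r hr
        have := ((hg' x (Ico_subset_Icc_self hx)).hasDerivWithinAt
          (s := Ici x)).liminf_right_slope_le hr
        refine this.mono fun z hz => ?_
        rwa [slope_def_field, div_eq_inv_mul] at hz
      · simp [hy0]
      · intro x hx
        have hxI : x ∈ Icc (0:ℝ) T := Ico_subset_Icc_self hx
        have hyx := hyΩ x hxI
        have hyεx := hyεΩ x hxI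
        have hsplit : Fε (yε x) - F (y x)
            = (F (yε x) - F (y x)) + (Fε (yε x) - F (yε x)) := by abel
        have h1 : ⟪yε x - y x, F (yε x) - F (y x)⟫ ≤ L * ‖yε x - y x‖ ^ 2 := by
          calc ⟪yε x - y x, F (yε x) - F (y x)⟫
              ≤ ‖yε x - y x‖ * ‖F (yε x) - F (y x)‖ := real_inner_le_norm _ _
            _ ≤ ‖yε x - y x‖ * (L * ‖yε x - y x‖) :=
                mul_le_mul_of_nonneg_left (hFLip _ hyεx _ hyx) (norm_nonneg _)
            _ = L * ‖yε x - y x‖ ^ 2 := by ring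
        have h2 : ⟪yε x - y x, Fε (yε x) - F (yε x)⟫
            ≤ ‖yε x - y x‖ * (β⁻¹ * M * ε) := by
          calc ⟪yε x - y x, Fε (yε x) - F (yε x)⟫
              ≤ ‖yε x - y x‖ * ‖Fε (yε x) - F (yε x)‖ := real_inner_le_norm _ _
            _ ≤ ‖yε x - y x‖ * (β⁻¹ * M * ε) :=
                mul_le_mul_of_nonneg_left (hdiff _ hyεx) (norm_nonneg _)
        have hinner : ⟪yε x - y x, Fε (yε x) - F (y x)⟫
            = ⟪yε x - y x, F (yε x) - F (y x)⟫
              + ⟪yε x - y x, Fε (yε x) - F (yε x)⟫ := by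
          rw [hsplit, inner_add_right]
        rw [hinner]
        have hsq : 0 ≤ (β⁻¹ * M * ‖yε x - y x‖ - ε) ^ 2 := sq_nonneg _
        have e1 : C = 2 * L + (β⁻¹ * M) ^ 2 := by
          rw [hC, div_eq_mul_inv, ← inv_pow, mul_pow]; ring
        rw [e1]
        nlinarith [h1, h2, hsq, sq_nonneg (‖yε x - y x‖)]
    have := key t ht
    rw [gronwallBound_of_K_ne_0 hC0, sub_zero] at this
    calc ‖yε t - y t‖ ^ 2 ≤ 0 * Real.exp (C * t) + ε ^ 2 / C * (Real.exp (C * t) - 1) := this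
      _ = ε ^ 2 / C * (Real.exp (C * t) - 1) := by ring
end

section
/- Let d, m ≥ 1, l > 0, β > 0, T ∈ (0,∞), B ∈ ℝ^{d×m}, Ω̄ = [−l,l]^d, let f : ℝ^d → ℝ^d be Lipschitz on Ω̄, let ℓ : ℝ^d → ℝ be continuous, and let v, v_1, v_2, … : ℝ^d → ℝ be continuously differentiable with ∇v_k → ∇v uniformly on Ω̄ as k → ∞. Fix y_0 ∈ Ω̄. For each k, let y_k : [0,T] → Ω̄ be differentiable with y_k(0) = y_0 and y_k'(t) = f(y_k(t)) − (1/β) B Bᵀ ∇v_k(y_k(t)) for all t ∈ [0,T]. Let y : [0,T] → Ω̄ satisfy y(0) = y_0 and y'(t) = f(y(t)) − (1/β) B Bᵀ ∇v(y(t)), and assume y is the unique such solution taking values in Ω̄. Then y_k → y uniformly on [0,T], and ∫_0^T (ℓ(y_k(t)) + (1/(2β))|Bᵀ∇v_k(y_k(t))|²) dt → ∫_0^T (ℓ(y(t)) + (1/(2β))|Bᵀ∇v(y(t))|²) dt as k → ∞. -/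
open Matrix Set Filter
open Metric Topology

-- mini-lemma: uniform convergence composed with continuous outer function
lemma unif_comp {α E F : Type*} [PseudoMetricSpace α] [MetricSpace E] [ProperSpace E]
    [PseudoMetricSpace F]
    {Φ : E → F} (hΦ : Continuous Φ) {K : Set E} (hK : IsCompact K)
    {u : ℕ → α → E} {w : α → E} {s : Set α}
    (hw : ∀ t ∈ s, w t ∈ K)
    (h : TendstoUniformlyOn u w atTop s) :
    TendstoUniformlyOn (fun n t => Φ (u n t)) (fun t => Φ (w t)) atTop s := by
  have hK1 : IsCompact (Metric.cthickening 1 K) := hK.cthickening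
  have hUC : UniformContinuousOn Φ (Metric.cthickening 1 K) :=
    hK1.uniformContinuousOn_of_continuous hΦ.continuousOn
  rw [Metric.tendstoUniformlyOn_iff] at h ⊢
  intro ε hε
  obtain ⟨δ, hδ, hδε⟩ := (Metric.uniformContinuousOn_iff).1 hUC ε hε
  filter_upwards [h (min δ 1) (lt_min hδ one_pos)] with n hn t ht
  have h1 : dist (u n t) (w t) < min δ 1 := by
    rw [dist_comm]; exact hn t ht
  have hmem : u n t ∈ Metric.cthickening 1 K :=
    Metric.mem_cthickening_of_dist_le _ _ _ _ (hw t ht) (le_of_lt (lt_of_lt_of_le h1 (min_le_right _ _)))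
  have hmem' : w t ∈ Metric.cthickening 1 K := Metric.self_subset_cthickening _ (hw t ht)
  have := hδε (w t) hmem' (u n t) hmem
  rw [dist_comm (u n t)] at h1
  exact this (lt_of_lt_of_le h1 (min_le_left _ _))

lemma tendsto_integral_of_unif {T : ℝ} (hT : 0 ≤ T) {h : ℕ → ℝ → ℝ} {g : ℝ → ℝ}
    (hconv : TendstoUniformlyOn h g atTop (Icc 0 T))
    (hc : ∀ k, ContinuousOn (h k) (Icc 0 T))
    (hc' : ContinuousOn g (Icc 0 T)) :
    Tendsto (fun k => ∫ t in (0:ℝ)..T, h k t) atTop (𝓝 (∫ t in (0:ℝ)..T, g t)) := by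
  rw [Metric.tendsto_atTop]
  intro ε hε
  have hε' : 0 < ε / (T + 1) := div_pos hε (by linarith)
  rw [Metric.tendstoUniformlyOn_iff] at hconv
  obtain ⟨N, hN⟩ := eventually_atTop.mp (hconv _ hε')
  refine ⟨N, fun k hk => ?_⟩
  have hik : IntervalIntegrable (h k) MeasureTheory.volume 0 T :=
    ((hc k).mono (by rw [uIcc_of_le hT])).intervalIntegrable
  have hig : IntervalIntegrable g MeasureTheory.volume 0 T :=
    (hc'.mono (by rw [uIcc_of_le hT])).intervalIntegrable
  rw [Real.dist_eq, ← intervalIntegral.integral_sub hik hig]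
  have hb : ∀ t ∈ Set.uIoc (0:ℝ) T, ‖h k t - g t‖ ≤ ε / (T + 1) := by
    intro t ht
    have ht' : t ∈ Icc 0 T := by
      rw [uIoc_of_le hT] at ht; exact ⟨le_of_lt ht.1, ht.2⟩
    have := hN k hk t ht'
    rw [dist_comm, Real.dist_eq] at this
    exact le_of_lt this
  have := intervalIntegral.norm_integral_le_of_norm_le_const hb
  have habs : |∫ t in (0:ℝ)..T, (h k t - g t)| ≤ ε / (T + 1) * |T - 0| := this
  calc |∫ t in (0:ℝ)..T, (h k t - g t)| ≤ ε / (T + 1) * |T - 0| := habs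
    _ = ε / (T + 1) * T := by rw [sub_zero, abs_of_nonneg hT]
    _ < ε := by
        rw [div_mul_eq_mul_div, div_lt_iff₀ (by linarith)]
        nlinarith

lemma aux_traj {E : Type*} [NormedAddCommGroup E] [NormedSpace ℝ E] [CompleteSpace E]
    {T : ℝ} (hT : 0 < T) {K : Set E} (hK : IsCompact K)
    {F : E → E} {Fs : ℕ → E → E}
    (hFc : ContinuousOn F K) (hFsc : ∀ k, ContinuousOn (Fs k) K)
    (hconv : TendstoUniformlyOn Fs F atTop K)
    {y0 : E} {ys : ℕ → ℝ → E} {y : ℝ → E}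
    (hys0 : ∀ k, ys k 0 = y0)
    (hysK : ∀ k, ∀ t ∈ Icc (0:ℝ) T, ys k t ∈ K)
    (hysode : ∀ k, ∀ t ∈ Icc (0:ℝ) T, HasDerivAt (ys k) (Fs k (ys k t)) t)
    (hycont : ContinuousOn y (Icc 0 T))
    (huniq : ∀ z : ℝ → E, z 0 = y0 → (∀ t ∈ Icc (0:ℝ) T, z t ∈ K) →
      (∀ t ∈ Icc (0:ℝ) T, HasDerivAt z (F (z t)) t) → ∀ t ∈ Icc (0:ℝ) T, z t = y t) :
    TendstoUniformlyOn (fun k t => ys k t) y atTop (Icc 0 T) := by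
  have h0T : (0:ℝ) ∈ Icc (0:ℝ) T := ⟨le_refl _, hT.le⟩
  -- uniform bound on the vector fields
  obtain ⟨M0, hM0⟩ := hK.exists_bound_of_continuousOn hFc
  set C : ℝ := max M0 0 + 1 with hCdef
  have hC0 : 0 ≤ C := by positivity
  obtain ⟨N, hN⟩ := eventually_atTop.mp ((Metric.tendstoUniformlyOn_iff.1 hconv) 1 one_pos)
  have hFsbd : ∀ k, N ≤ k → ∀ x ∈ K, ‖Fs k x‖ ≤ C := by
    intro k hk x hx
    have h1 := hN k hk x hx
    have h2 : ‖Fs k x‖ - ‖F x‖ ≤ ‖F x - Fs k x‖ := by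
      rw [norm_sub_rev]; exact norm_sub_norm_le _ _
    rw [dist_eq_norm] at h1
    have := hM0 x hx
    have : ‖F x‖ ≤ max M0 0 := le_trans this (le_max_left _ _)
    linarith
  -- Lipschitz estimate for the trajectories with large index
  have hLip : ∀ k, N ≤ k → ∀ a ∈ Icc (0:ℝ) T, ∀ b ∈ Icc (0:ℝ) T,
      ‖ys k a - ys k b‖ ≤ C * ‖a - b‖ := by
    intro k hk a ha b hb
    exact (convex_Icc (0:ℝ) T).norm_image_sub_le_of_norm_hasDerivWithin_le
      (fun t ht => (hysode k t ht).hasDerivWithinAt)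
      (fun t ht => hFsbd k hk _ (hysK k t ht)) hb ha
  have hyscont : ∀ k, ContinuousOn (ys k) (Icc (0:ℝ) T) := fun k t ht =>
    ((hysode k t ht).continuousAt).continuousWithinAt
  set X := Icc (0:ℝ) T
  haveI : CompactSpace X := isCompact_iff_compactSpace.mp isCompact_Icc
  set Yk : ℕ → C(X, E) := fun k => ⟨X.restrict (ys k), (hyscont k).restrict⟩ with hYk
  set Ylim : C(X, E) := ⟨X.restrict y, hycont.restrict⟩ with hYlim
  suffices h : Tendsto Yk atTop (𝓝 Ylim) by
    rw [tendstoUniformlyOn_iff_tendstoUniformly_comp_coe]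
    exact ContinuousMap.tendsto_iff_tendstoUniformly.mp h
  -- the compact set of candidate limits
  set S : Set C(X, E) := {g | (∀ a b : X, dist (g a) (g b) ≤ C * dist a b) ∧
      (∀ a, g a ∈ K) ∧ g ⟨0, h0T⟩ = y0} with hS
  have hScpt : IsCompact S := by
    apply ArzelaAscoli.isCompact_of_equicontinuous
    · -- compactness of the image in the product topology
      have himg : ContinuousMap.toFun '' S = {h : X → E |
          (∀ a b : X, dist (h a) (h b) ≤ C * dist a b) ∧ (∀ a, h a ∈ K) ∧ h ⟨0, h0T⟩ = y0} := by
        ext g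
        constructor
        · rintro ⟨g0, hg0, rfl⟩; exact hg0
        · intro hg
          have hcont : Continuous g := by
            have : LipschitzWith (Real.toNNReal C) g := by
              rw [lipschitzWith_iff_dist_le_mul]
              intro a b
              rw [Real.coe_toNNReal C hC0]
              exact hg.1 a b
            exact this.continuous
          exact ⟨⟨g, hcont⟩, hg, rfl⟩
      rw [himg]
      apply IsCompact.of_isClosed_subset (isCompact_univ_pi (fun _ : X => hK))
      · simp only [setOf_and]
        apply IsClosed.inter
        · simp only [setOf_forall]
          exact isClosed_iInter fun a => isClosed_iInter fun b =>
            isClosed_le ((continuous_apply a).dist (continuous_apply b)) continuous_const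
        · apply IsClosed.inter
          · simp only [setOf_forall]
            exact isClosed_iInter fun a => (hK.isClosed).preimage (continuous_apply a)
          · exact isClosed_eq (continuous_apply _) continuous_const
      · intro g hg a _
        exact hg.2.1 a
    · -- equicontinuity
      apply Metric.equicontinuous_of_continuity_modulus (fun r => C * r)
      · have : Continuous (fun r : ℝ => C * r) := continuous_const.mul continuous_id
        simpa using this.tendsto 0
      · intro a b g
        exact g.2.1 a b
  have hmemS : ∀ k, N ≤ k → Yk k ∈ S := by
    intro k hk
    refine ⟨?_, fun a => hysK k a a.2, hys0 k⟩
    intro a b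
    have := hLip k hk a a.2 b b.2
    rw [Subtype.dist_eq, dist_eq_norm, dist_eq_norm]
    exact this
  -- subsequence argument
  apply tendsto_of_subseq_tendsto
  intro ns hns
  obtain ⟨n₀, hn₀⟩ := eventually_atTop.mp (hns.eventually (eventually_ge_atTop N))
  have hu : ∀ n, Yk (ns (n + n₀)) ∈ S := fun n => hmemS _ (hn₀ _ (Nat.le_add_left _ _))
  obtain ⟨Z, hZS, φ, hφ, hZt⟩ := hScpt.tendsto_subseq hu
  set ψ : ℕ → ℕ := fun j => ns (φ j + n₀) with hψdef
  have hψ : Tendsto ψ atTop atTop :=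
    hns.comp (tendsto_atTop_mono (fun j => (hφ.id_le j).trans (Nat.le_add_right _ _)) tendsto_id)
  have hψN : ∀ j, N ≤ ψ j := fun j => hn₀ _ (Nat.le_add_left _ _)
  have hZconv : Tendsto (fun j => Yk (ψ j)) atTop (𝓝 Z) := hZt
  have hZunif : TendstoUniformly (fun j (t : X) => ys (ψ j) t) (fun t : X => Z t) atTop :=
    ContinuousMap.tendsto_iff_tendstoUniformly.mp hZconv
  -- the candidate limit trajectory, extended to all of ℝ
  set zh : ℝ → E := fun t => Z (projIcc 0 T hT.le t) with hzh
  have hzhcont : Continuous zh := Z.continuous.comp continuous_projIcc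
  have hzhK : ∀ t, zh t ∈ K := fun t => hZS.2.1 _
  have hzhIcc : ∀ t, ∀ ht : t ∈ Icc (0:ℝ) T, zh t = Z ⟨t, ht⟩ := by
    intro t ht
    simp only [hzh]
    rw [projIcc_of_mem hT.le ht]
  have hzh0 : zh 0 = y0 := by rw [hzhIcc 0 h0T]; exact hZS.2.2
  have hptw : ∀ t ∈ Icc (0:ℝ) T, Tendsto (fun j => ys (ψ j) t) atTop (𝓝 (zh t)) := by
    intro t ht
    rw [hzhIcc t ht]
    exact hZunif.tendsto_at ⟨t, ht⟩
  -- integral equation for the approximants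
  have hinteq : ∀ k, ∀ t ∈ Icc (0:ℝ) T, ys k t = y0 + ∫ s in (0:ℝ)..t, Fs k (ys k s) := by
    intro k t ht
    have hsub : uIcc (0:ℝ) t ⊆ Icc (0:ℝ) T := by
      rw [uIcc_of_le ht.1]; exact Icc_subset_Icc le_rfl ht.2
    have hderiv : ∀ s ∈ uIcc (0:ℝ) t, HasDerivAt (ys k) (Fs k (ys k s)) s :=
      fun s hs => hysode k s (hsub hs)
    have hcontint : ContinuousOn (fun s => Fs k (ys k s)) (uIcc (0:ℝ) t) :=
      (hFsc k).comp ((hyscont k).mono hsub) (fun s hs => hysK k s (hsub hs))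
    have h2 : ∫ s in (0:ℝ)..t, Fs k (ys k s) = ys k t - y0 := by
      rw [intervalIntegral.integral_eq_sub_of_hasDerivAt hderiv hcontint.intervalIntegrable,
        hys0 k]
    rw [h2]; abel
  -- pass to the limit in the integral equation
  have hinteqz : ∀ t ∈ Icc (0:ℝ) T, zh t = y0 + ∫ s in (0:ℝ)..t, F (zh s) := by
    intro t ht
    have hsub : uIcc (0:ℝ) t ⊆ Icc (0:ℝ) T := by
      rw [uIcc_of_le ht.1]; exact Icc_subset_Icc le_rfl ht.2
    have hsub' : Set.uIoc (0:ℝ) t ⊆ Icc (0:ℝ) T := fun s hs => hsub (uIoc_subset_uIcc hs)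
    refine tendsto_nhds_unique (hptw t ht) ?_
    have heq : ∀ j, ys (ψ j) t = y0 + ∫ s in (0:ℝ)..t, Fs (ψ j) (ys (ψ j) s) :=
      fun j => hinteq _ t ht
    rw [show (fun j => ys (ψ j) t) = fun j => y0 + ∫ s in (0:ℝ)..t, Fs (ψ j) (ys (ψ j) s) from
      funext heq]
    apply Tendsto.const_add
    apply intervalIntegral.tendsto_integral_filter_of_dominated_convergence (bound := fun _ => C)
    · refine Eventually.of_forall fun j => ?_
      exact (((hFsc (ψ j)).comp ((hyscont (ψ j)).mono hsub)
        (fun s hs => hysK (ψ j) s (hsub hs))).mono uIoc_subset_uIcc).aestronglyMeasurable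
        measurableSet_uIoc
    · refine Eventually.of_forall fun j => ?_
      exact MeasureTheory.ae_of_all _ fun s hs => hFsbd _ (hψN j) _ (hysK _ s (hsub' hs))
    · exact intervalIntegrable_const
    · refine MeasureTheory.ae_of_all _ fun s hs => ?_
      have hsIcc : s ∈ Icc (0:ℝ) T := hsub' hs
      have hxjK : ∀ j, ys (ψ j) s ∈ K := fun j => hysK _ s hsIcc
      have hxK : zh s ∈ K := hzhK s
      have hxconv : Tendsto (fun j => ys (ψ j) s) atTop (𝓝 (zh s)) := hptw s hsIcc
      have hFx : Tendsto (fun j => F (ys (ψ j) s)) atTop (𝓝 (F (zh s))) :=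
        (hFc (zh s) hxK).tendsto.comp
          (tendsto_nhdsWithin_iff.2 ⟨hxconv, Eventually.of_forall hxjK⟩)
      have hd1 : Tendsto (fun j => dist (Fs (ψ j) (ys (ψ j) s)) (F (ys (ψ j) s))) atTop (𝓝 0) := by
        rw [Metric.tendsto_nhds]
        intro ε hε
        have hev := (Metric.tendstoUniformlyOn_iff.1 hconv) ε hε
        filter_upwards [hψ.eventually hev] with j hj
        rw [Real.dist_eq, sub_zero, abs_of_nonneg dist_nonneg, dist_comm]
        exact hj _ (hxjK j)
      have hd2 : Tendsto (fun j => dist (F (ys (ψ j) s)) (F (zh s))) atTop (𝓝 0) :=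
        tendsto_iff_dist_tendsto_zero.1 hFx
      have hkey : Tendsto (fun j => dist (Fs (ψ j) (ys (ψ j) s)) (F (zh s))) atTop (𝓝 0) := by
        apply squeeze_zero (fun j => dist_nonneg)
          (fun j => dist_triangle (Fs (ψ j) (ys (ψ j) s)) (F (ys (ψ j) s)) (F (zh s)))
        simpa using hd1.add hd2
      exact tendsto_iff_dist_tendsto_zero.2 hkey
  -- the limit solves the ODE
  set w : ℝ → E := fun t => y0 + ∫ s in (0:ℝ)..t, F (zh s) with hw
  have hgcont : Continuous fun s => F (zh s) := hFc.comp_continuous hzhcont hzhK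
  have hwderiv : ∀ t : ℝ, HasDerivAt w (F (zh t)) t := by
    intro t
    have h1 : HasDerivAt (fun u => ∫ s in (0:ℝ)..u, F (zh s)) (F (zh t)) t :=
      intervalIntegral.integral_hasDerivAt_right (hgcont.intervalIntegrable _ _)
        (hgcont.aestronglyMeasurable.stronglyMeasurableAtFilter) hgcont.continuousAt
    exact h1.const_add y0
  have hweq : ∀ t ∈ Icc (0:ℝ) T, w t = zh t := fun t ht => (hinteqz t ht).symm
  have hwy : ∀ t ∈ Icc (0:ℝ) T, w t = y t := by
    apply huniq
    · simp [hw]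
    · intro t ht; rw [hweq t ht]; exact hzhK t
    · intro t ht
      have h1 := hwderiv t
      rwa [← hweq t ht] at h1
  have hZeq : Z = Ylim := by
    ext a
    have h1 : zh a = Z a := by
      rw [hzhIcc a a.2]
    have h2 : w a = y a := hwy a a.2
    have h3 : w a = zh a := hweq a a.2
    show Z a = y a
    rw [← h1, ← h3, h2]
  exact ⟨fun n => φ n + n₀, by rw [← hZeq]; exact hZt⟩

lemma unif_add {α : Type*} {u1 u2 : ℕ → α → ℝ} {w1 w2 : α → ℝ} {s : Set α}
    (h1 : TendstoUniformlyOn u1 w1 atTop s) (h2 : TendstoUniformlyOn u2 w2 atTop s) :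
    TendstoUniformlyOn (fun n t => u1 n t + u2 n t) (fun t => w1 t + w2 t) atTop s := by
  rw [Metric.tendstoUniformlyOn_iff] at h1 h2 ⊢
  intro ε hε
  filter_upwards [h1 (ε/2) (half_pos hε), h2 (ε/2) (half_pos hε)] with n hn1 hn2 t ht
  have e1 := hn1 t ht
  have e2 := hn2 t ht
  rw [Real.dist_eq] at e1 e2 ⊢
  have : w1 t + w2 t - (u1 n t + u2 n t) = (w1 t - u1 n t) + (w2 t - u2 n t) := by ring
  rw [this]
  calc |(w1 t - u1 n t) + (w2 t - u2 n t)| ≤ |w1 t - u1 n t| + |w2 t - u2 n t| := abs_add_le _ _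
    _ < ε/2 + ε/2 := by linarith
    _ = ε := by ring


/-- continuity of finite-horizon closed-loop trajectories and costs with
respect to `C¹` perturbations of the feedback potential. -/
theorem stmt_7 (d m : ℕ) (hd : 1 ≤ d) (hm : 1 ≤ m)
    (l β T : ℝ) (hl : 0 < l) (hβ : 0 < β) (hT : 0 < T)
    (B : Matrix (Fin d) (Fin m) ℝ)
    (Ω : Set (EuclideanSpace ℝ (Fin d)))
    (hΩ : Ω = {y | ∀ i, |y i| ≤ l})
    (f : EuclideanSpace ℝ (Fin d) → EuclideanSpace ℝ (Fin d))
    (Lf : ℝ) (hfLip : ∀ x ∈ Ω, ∀ y ∈ Ω, ‖f x - f y‖ ≤ Lf * ‖x - y‖)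
    (ℓ : EuclideanSpace ℝ (Fin d) → ℝ) (hℓ : Continuous ℓ)
    (v : EuclideanSpace ℝ (Fin d) → ℝ) (vs : ℕ → EuclideanSpace ℝ (Fin d) → ℝ)
    (hv : ContDiff ℝ 1 v) (hvs : ∀ k, ContDiff ℝ 1 (vs k))
    (hgradconv : TendstoUniformlyOn (fun k y => gradient (vs k) y) (fun y => gradient v y)
      atTop Ω)
    (y0 : EuclideanSpace ℝ (Fin d)) (hy0 : y0 ∈ Ω)
    (ys : ℕ → ℝ → EuclideanSpace ℝ (Fin d)) (y : ℝ → EuclideanSpace ℝ (Fin d))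
    (hys0 : ∀ k, ys k 0 = y0)
    (hysΩ : ∀ k, ∀ t ∈ Icc (0:ℝ) T, ys k t ∈ Ω)
    (hysode : ∀ k, ∀ t ∈ Icc (0:ℝ) T,
      HasDerivAt (ys k) (f (ys k t) - β⁻¹ • matVec B (matVec Bᵀ (gradient (vs k) (ys k t)))) t)
    (hy0' : y 0 = y0)
    (hyΩ : ∀ t ∈ Icc (0:ℝ) T, y t ∈ Ω)
    (hyode : ∀ t ∈ Icc (0:ℝ) T,
      HasDerivAt y (f (y t) - β⁻¹ • matVec B (matVec Bᵀ (gradient v (y t)))) t)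
    (huniq : ∀ z : ℝ → EuclideanSpace ℝ (Fin d), z 0 = y0 →
      (∀ t ∈ Icc (0:ℝ) T, z t ∈ Ω) →
      (∀ t ∈ Icc (0:ℝ) T,
        HasDerivAt z (f (z t) - β⁻¹ • matVec B (matVec Bᵀ (gradient v (z t)))) t) →
      ∀ t ∈ Icc (0:ℝ) T, z t = y t) :
    TendstoUniformlyOn (fun k t => ys k t) y atTop (Icc 0 T) ∧
    Tendsto (fun k => ∫ t in (0:ℝ)..T,
        (ℓ (ys k t) + 1 / (2 * β) * ‖matVec Bᵀ (gradient (vs k) (ys k t))‖ ^ 2)) atTop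
      (nhds (∫ t in (0:ℝ)..T,
        (ℓ (y t) + 1 / (2 * β) * ‖matVec Bᵀ (gradient v (y t))‖ ^ 2))) := by
    classical
  -- Ω is compact
  have hΩc : IsCompact Ω := by
    rw [hΩ]
    apply Metric.isCompact_of_isClosed_isBounded
    · simp only [setOf_forall]
      refine isClosed_iInter fun i => ?_
      exact isClosed_le (continuous_abs.comp (EuclideanSpace.proj i).continuous) continuous_const
    · apply Bornology.IsBounded.subset (Metric.isBounded_closedBall
        (x := (0 : EuclideanSpace ℝ (Fin d))) (r := Real.sqrt d * l))
      intro x hx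
      simp only [Metric.mem_closedBall, dist_zero_right]
      rw [EuclideanSpace.norm_eq]
      have hb : ∑ i, ‖x i‖ ^ 2 ≤ (d : ℝ) * l ^ 2 := by
        calc ∑ i, ‖x i‖ ^ 2 ≤ ∑ _i : Fin d, l ^ 2 := by
              apply Finset.sum_le_sum
              intro i _
              have := hx i
              have h0 : (0:ℝ) ≤ |x i| := abs_nonneg _
              rw [Real.norm_eq_abs]
              nlinarith
          _ = (d : ℝ) * l ^ 2 := by simp [mul_comm]
      calc Real.sqrt (∑ i, ‖x i‖ ^ 2) ≤ Real.sqrt ((d : ℝ) * l ^ 2) := Real.sqrt_le_sqrt hb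
        _ = Real.sqrt d * l := by
            rw [Real.sqrt_mul (Nat.cast_nonneg d), Real.sqrt_sq hl.le]
  -- the feedback linear map
  set G : EuclideanSpace ℝ (Fin d) →L[ℝ] EuclideanSpace ℝ (Fin d) := β⁻¹ • LinearMap.toContinuousLinearMap
      ((Matrix.toEuclideanLin B).comp (Matrix.toEuclideanLin Bᵀ)) with hGdef
  have hGeq : ∀ w : EuclideanSpace ℝ (Fin d), β⁻¹ • matVec B (matVec Bᵀ w) = G w := fun w => rfl
  -- the vector fields
  set Fs : ℕ → EuclideanSpace ℝ (Fin d) → EuclideanSpace ℝ (Fin d) := fun k x => f x - β⁻¹ • matVec B (matVec Bᵀ (gradient (vs k) x)) with hFs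
  set F : EuclideanSpace ℝ (Fin d) → EuclideanSpace ℝ (Fin d) := fun x => f x - β⁻¹ • matVec B (matVec Bᵀ (gradient v x)) with hF
  -- continuity of gradients
  have hgradc : ∀ w : EuclideanSpace ℝ (Fin d) → ℝ, ContDiff ℝ 1 w → Continuous (gradient w) := by
    intro w hw
    show Continuous fun x => (InnerProductSpace.toDual ℝ (EuclideanSpace ℝ (Fin d))).symm (fderiv ℝ w x)
    exact (InnerProductSpace.toDual ℝ (EuclideanSpace ℝ (Fin d))).symm.continuous.comp (hw.continuous_fderiv one_ne_zero)
  have hgradv : Continuous (gradient v) := hgradc v hv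
  have hgradvs : ∀ k, Continuous (gradient (vs k)) := fun k => hgradc _ (hvs k)
  -- continuity of f on Ω
  have hfc : ContinuousOn f Ω := by
    have : LipschitzOnWith (Real.toNNReal Lf) f Ω := by
      rw [lipschitzOnWith_iff_dist_le_mul]
      intro x hx z hz
      rw [dist_eq_norm, dist_eq_norm, Real.coe_toNNReal']
      calc ‖f x - f z‖ ≤ Lf * ‖x - z‖ := hfLip x hx z hz
        _ ≤ max Lf 0 * ‖x - z‖ := mul_le_mul_of_nonneg_right (le_max_left _ _) (norm_nonneg _)
    exact this.continuousOn
  have hFc : ContinuousOn F Ω := by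
    apply ContinuousOn.sub hfc
    have : Continuous fun x : EuclideanSpace ℝ (Fin d) => G (gradient v x) := G.continuous.comp hgradv
    exact this.continuousOn
  have hFsc : ∀ k, ContinuousOn (Fs k) Ω := by
    intro k
    apply ContinuousOn.sub hfc
    have : Continuous fun x : EuclideanSpace ℝ (Fin d) => G (gradient (vs k) x) := G.continuous.comp (hgradvs k)
    exact this.continuousOn
  -- uniform convergence of vector fields
  have hconvF : TendstoUniformlyOn Fs F atTop Ω := by
    have hg2 := hgradconv
    rw [Metric.tendstoUniformlyOn_iff] at hg2 ⊢
    intro ε hε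
    have hCG : (0:ℝ) < ‖G‖ + 1 := by have := norm_nonneg G; linarith
    filter_upwards [hg2 (ε / (‖G‖ + 1)) (div_pos hε hCG)] with k hk x hx
    have h1 := hk x hx
    have h2 : F x - Fs k x = G (gradient (vs k) x) - G (gradient v x) := by
      simp only [hF, hFs, hGeq]
      abel
    rw [dist_eq_norm, h2, ← map_sub]
    calc ‖G (gradient (vs k) x - gradient v x)‖
        ≤ ‖G‖ * ‖gradient (vs k) x - gradient v x‖ := G.le_opNorm _
      _ ≤ ‖G‖ * (ε / (‖G‖ + 1)) := by
          apply mul_le_mul_of_nonneg_left _ (norm_nonneg G)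
          rw [← dist_eq_norm, dist_comm]
          exact h1.le
      _ < (‖G‖ + 1) * (ε / (‖G‖ + 1)) := by
          apply mul_lt_mul_of_pos_right _ (div_pos hε hCG)
          linarith
      _ = ε := by rw [mul_comm, div_mul_cancel₀ _ (ne_of_gt hCG)]
  -- continuity of trajectories
  have hyscont : ∀ k, ContinuousOn (ys k) (Icc (0:ℝ) T) := fun k t ht =>
    ((hysode k t ht).continuousAt).continuousWithinAt
  have hycont : ContinuousOn y (Icc (0:ℝ) T) := fun t ht =>
    ((hyode t ht).continuousAt).continuousWithinAt
  -- Part 1: uniform convergence of trajectories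
  have part1 : TendstoUniformlyOn (fun k t => ys k t) y atTop (Icc 0 T) := by
    apply aux_traj hT hΩc hFc hFsc hconvF hys0 hysΩ _ hycont
    · intro z hz0 hzΩ hzode
      exact huniq z hz0 hzΩ hzode
    · intro k t ht
      exact hysode k t ht
  refine ⟨part1, ?_⟩
  -- Part 2: convergence of the costs
  set Φ : EuclideanSpace ℝ (Fin d) → ℝ := fun x => 1 / (2 * β) * ‖matVec Bᵀ x‖ ^ 2 with hΦdef
  have hmBt : Continuous (matVec Bᵀ : EuclideanSpace ℝ (Fin d) → EuclideanSpace ℝ (Fin m)) :=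
    (LinearMap.toContinuousLinearMap (Matrix.toEuclideanLin Bᵀ)).continuous
  have hΦc : Continuous Φ := continuous_const.mul ((hmBt.norm).pow 2)
  -- part A : ℓ ∘ ys k → ℓ ∘ y uniformly
  have partA : TendstoUniformlyOn (fun k t => ℓ (ys k t)) (fun t => ℓ (y t)) atTop (Icc 0 T) :=
    unif_comp hℓ hΩc hyΩ part1
  -- gradient composed
  have partP : TendstoUniformlyOn (fun k t => gradient v (ys k t)) (fun t => gradient v (y t))
      atTop (Icc 0 T) := unif_comp hgradv hΩc hyΩ part1
  have partR : TendstoUniformlyOn (fun k t => gradient (vs k) (ys k t))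
      (fun t => gradient v (y t)) atTop (Icc 0 T) := by
    have hg2 := hgradconv
    rw [Metric.tendstoUniformlyOn_iff] at hg2 partP ⊢
    intro ε hε
    filter_upwards [partP (ε/2) (half_pos hε), hg2 (ε/2) (half_pos hε)] with k h1 h2 t ht
    have e1 := h1 t ht
    have e2 := h2 (ys k t) (hysΩ k t ht)
    calc dist (gradient v (y t)) (gradient (vs k) (ys k t))
        ≤ dist (gradient v (y t)) (gradient v (ys k t))
          + dist (gradient v (ys k t)) (gradient (vs k) (ys k t)) := dist_triangle _ _ _
      _ < ε/2 + ε/2 := by exact add_lt_add e1 e2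
      _ = ε := by ring
  have hK3 : IsCompact ((fun x => gradient v x) '' Ω) := hΩc.image hgradv
  have partB : TendstoUniformlyOn (fun k t => Φ (gradient (vs k) (ys k t)))
      (fun t => Φ (gradient v (y t))) atTop (Icc 0 T) := by
    apply unif_comp hΦc hK3 _ partR
    intro t ht
    exact mem_image_of_mem _ (hyΩ t ht)
  have hsum : TendstoUniformlyOn
      (fun k t => ℓ (ys k t) + Φ (gradient (vs k) (ys k t)))
      (fun t => ℓ (y t) + Φ (gradient v (y t))) atTop (Icc 0 T) := unif_add partA partB
  have hck : ∀ k, ContinuousOn (fun t => ℓ (ys k t) + Φ (gradient (vs k) (ys k t)))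
      (Icc (0:ℝ) T) := by
    intro k
    exact (hℓ.comp_continuousOn (hyscont k)).add
      ((hΦc.comp (hgradvs k)).comp_continuousOn (hyscont k))
  have hcl : ContinuousOn (fun t => ℓ (y t) + Φ (gradient v (y t))) (Icc (0:ℝ) T) :=
    (hℓ.comp_continuousOn hycont).add ((hΦc.comp hgradv).comp_continuousOn hycont)
  exact tendsto_integral_of_unif hT.le hsum hck hcl
end
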